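/- Let g ≥ 1 and let V = (Fin g → ZMod 2). Let (v₁, …, v_g) be a basis of V over ZMod 2 and let a₁, …, a_g ∈ ZMod 4 be values satisfying the necessary compatibility condition 2·aᵢ + ι(B(vᵢ,vᵢ)) = 0 for each i. Then there exists a ℤ₄-quadratic form q on V with q(vᵢ) = aᵢ for all i. -/

import Mathlib

/-- The mod-2 intersection form on `Fin g → ZMod 2` (dot product). -/
def B {g : ℕ} (x y : Fin g → ZMod 2) : ZMod 2 := ∑ i, x i * y i

/-- The doubling map `ZMod 2 → ZMod 4`, sending 0 ↦ 0 and 1 ↦ 2. -/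
def ι : ZMod 2 → ZMod 4 := fun a => 2 * (a.val : ZMod 4)

/-- A ℤ₄-quadratic form on `Fin g → ZMod 2`. -/
def IsZ4Quad {g : ℕ} (q : (Fin g → ZMod 2) → ZMod 4) : Prop :=
  ∀ x y, q (x + y) = q x + q y + ι (B x y)

/-- The {0,1}-lift `ZMod 2 → ZMod 4`. -/
def ν : ZMod 2 → ZMod 4 := fun a => (a.val : ZMod 4)

lemma nu_zero : ν 0 = 0 := by decide
lemma nu_one : ν 1 = 1 := by decide

lemma nu_add : ∀ (u w : ZMod 2), ν (u + w) = ν u + ν w - 2 * ν u * ν w := by decide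

lemma iota_mul : ∀ (u w e : ZMod 2), ι (u * w * e) = 2 * (ν u * ν w * ν e) := by decide

lemma iota_add : ∀ (u w : ZMod 2), ι (u + w) = ι u + ι w := by decide

lemma quad_id : ∀ (u u' w w' e : ZMod 2), 2 * (ν (u + u') * ν (w + w') * ν e) =
    2 * (ν u * ν w * ν e) + 2 * (ν u' * ν w' * ν e) + 2 * (ν u * ν w' * ν e)
      + 2 * (ν u' * ν w * ν e) := by decide

lemma lin_id (u w e : ZMod 2) (A : ZMod 4) (h : 2 * A + 2 * ν e = 0) :
    ν (u + w) * A = ν u * A + ν w * A + 2 * (ν u * ν w * ν e) := by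
  rw [nu_add]
  linear_combination (-(ν u * ν w)) * h

/-- `ι` as an additive hom. -/
def ιh : ZMod 2 →+ ZMod 4 where
  toFun := ι
  map_zero' := by decide
  map_add' := iota_add

lemma B_symm {g : ℕ} (x y : Fin g → ZMod 2) : B x y = B y x := by
  unfold B; exact Finset.sum_congr rfl fun i _ => mul_comm _ _

lemma B_expand {g : ℕ} (v : Module.Basis (Fin g) (ZMod 2) (Fin g → ZMod 2))
    (x y : Fin g → ZMod 2) :
    B x y = ∑ i, ∑ j, v.repr x i * v.repr y j * B (v i) (v j) := by
  unfold B
  calc ∑ k, x k * y k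
      = ∑ k, (∑ i, v.repr x i * v i k) * (∑ j, v.repr y j * v j k) := by
        refine Finset.sum_congr rfl fun k _ => ?_
        conv_lhs => rw [← v.sum_repr x, ← v.sum_repr y]
        simp [Finset.sum_apply]
    _ = ∑ k, ∑ i, ∑ j, (v.repr x i * v i k) * (v.repr y j * v j k) := by
        refine Finset.sum_congr rfl fun k _ => ?_
        rw [Finset.sum_mul_sum]
    _ = ∑ i, ∑ k, ∑ j, (v.repr x i * v i k) * (v.repr y j * v j k) := Finset.sum_comm
    _ = ∑ i, ∑ j, ∑ k, (v.repr x i * v i k) * (v.repr y j * v j k) :=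
        Finset.sum_congr rfl fun i _ => Finset.sum_comm
    _ = ∑ i, ∑ j, v.repr x i * v.repr y j * ∑ k, v i k * v j k := by
        refine Finset.sum_congr rfl fun i _ => Finset.sum_congr rfl fun j _ => ?_
        rw [Finset.mul_sum]
        exact Finset.sum_congr rfl fun k _ => by ring

lemma sum_split {g : ℕ} (T : Fin g → Fin g → ZMod 4) :
    ∑ i, ∑ j, T i j = ∑ i, T i i + ∑ i, ∑ j ∈ Finset.Ioi i, (T i j + T j i) := by
  have h1 := Finset.sum_sum_Ioi_add_eq_sum_sum_off_diag (fun i j => T j i)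
  have h2 : ∀ i : Fin g, ∑ j ∈ ({i}ᶜ : Finset (Fin g)), T i j + T i i = ∑ j, T i j := by
    intro i; simpa using Finset.sum_compl_add_sum ({i} : Finset (Fin g)) (T i)
  calc ∑ i, ∑ j, T i j = ∑ i, (∑ j ∈ ({i}ᶜ : Finset (Fin g)), T i j + T i i) := by
        exact Finset.sum_congr rfl fun i _ => (h2 i).symm
    _ = ∑ i, T i i + ∑ i, ∑ j ∈ ({i}ᶜ : Finset (Fin g)), T i j := by
        rw [Finset.sum_add_distrib]; ring
    _ = _ := by congr 1; convert h1.symm using 2 <;> exact Finset.sum_congr (by congr!) fun _ _ => rfl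

theorem stmt_3 (g : ℕ) (hg : 1 ≤ g)
    (v : Module.Basis (Fin g) (ZMod 2) (Fin g → ZMod 2))
    (a : Fin g → ZMod 4)
    (ha : ∀ i, 2 * a i + ι (B (v i) (v i)) = 0) :
    ∃ q : (Fin g → ZMod 2) → ZMod 4, IsZ4Quad q ∧ ∀ i, q (v i) = a i := by
  classical
  refine ⟨fun x => ∑ i, ν (v.repr x i) * a i
      + ∑ i, ∑ j ∈ Finset.Ioi i, 2 * (ν (v.repr x i) * ν (v.repr x j) * ν (B (v i) (v j))),
      ?_, ?_⟩
  · intro x y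
    simp only [map_add, Finsupp.add_apply]
    have hB : ι (B x y) = ∑ i, ∑ j, 2 * (ν (v.repr x i) * ν (v.repr y j) * ν (B (v i) (v j))) := by
      rw [B_expand v x y]
      rw [show (ι (∑ i, ∑ j, v.repr x i * v.repr y j * B (v i) (v j))
            = ιh (∑ i, ∑ j, v.repr x i * v.repr y j * B (v i) (v j))) from rfl,
        map_sum]
      refine Finset.sum_congr rfl fun i _ => ?_
      rw [map_sum]
      exact Finset.sum_congr rfl fun j _ => iota_mul _ _ _
    rw [hB, sum_split]
    have hlin : ∀ i : Fin g, ν (v.repr x i + v.repr y i) * a i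
        = ν (v.repr x i) * a i + ν (v.repr y i) * a i
          + 2 * (ν (v.repr x i) * ν (v.repr y i) * ν (B (v i) (v i))) := by
      intro i
      refine lin_id _ _ _ _ ?_
      have := ha i
      rwa [show ι (B (v i) (v i)) = 2 * ν (B (v i) (v i)) from rfl] at this
    rw [Finset.sum_congr rfl fun i _ => hlin i]
    have hquad : ∀ i : Fin g, ∀ j ∈ Finset.Ioi i,
        2 * (ν (v.repr x i + v.repr y i) * ν (v.repr x j + v.repr y j) * ν (B (v i) (v j)))
        = 2 * (ν (v.repr x i) * ν (v.repr x j) * ν (B (v i) (v j)))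
          + 2 * (ν (v.repr y i) * ν (v.repr y j) * ν (B (v i) (v j)))
          + (2 * (ν (v.repr x i) * ν (v.repr y j) * ν (B (v i) (v j)))
            + 2 * (ν (v.repr x j) * ν (v.repr y i) * ν (B (v j) (v i)))) := by
      intro i j _
      rw [B_symm (v j) (v i), quad_id]
      ring
    rw [Finset.sum_congr rfl fun i _ => Finset.sum_congr rfl (hquad i)]
    simp only [Finset.sum_add_distrib]
    abel
  · intro i
    dsimp only
    have hrepr : ∀ j, v.repr (v i) j = if i = j then 1 else 0 := by
      intro j; rw [v.repr_self]; exact Finsupp.single_apply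
    have h1 : ∑ j, ν (v.repr (v i) j) * a j = a i := by
      rw [Finset.sum_congr rfl fun j _ => by rw [hrepr j]]
      rw [Finset.sum_eq_single i]
      · simp [nu_one]
      · intro j _ hj; simp [Ne.symm hj, nu_zero]
      · simp
    have h2 : ∑ k, ∑ j ∈ Finset.Ioi k, 2 * (ν (v.repr (v i) k) * ν (v.repr (v i) j)
        * ν (B (v k) (v j))) = 0 := by
      refine Finset.sum_eq_zero fun k _ => Finset.sum_eq_zero fun j hj => ?_
      rw [hrepr k, hrepr j]
      rcases eq_or_ne i k with rfl | hk
      · have hij : i ≠ j := (Finset.mem_Ioi.mp hj).ne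
        simp [hij, nu_zero]
      · simp [hk, nu_zero]
    rw [h1, h2, add_zero]
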